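/- Let Δ : ℂ[x] → ℂ[x] ⊗ ℂ[x] be the unique ℂ-algebra homomorphism with Δ(x) = x⊗1 + 1⊗x; equivalently, identifying ℂ[x] ⊗ ℂ[x] with the two-variable polynomial ring ℂ[x,y], Δ(p) is the polynomial p(x+y). Then for every real s ≥ 0, every real r > 0 and every polynomial p ∈ ℂ[x], writing Δ(p) = Σ_{i,j} c_{ij} x^i ⊗ x^j, one has Σ_{i,j} |c_{ij}| r^{i+j}/(i!·j!)^s ≤ ‖p‖_{2^{s+1}·r, s}. -/

import Mathlib

/-- The prenorm `‖p‖_{r,s} = Σ_n |a_n| rⁿ/(n!)^s` on `ℂ[x]`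
(with `(n!)^s` a real power). -/
noncomputable def pnorm (r s : ℝ) (p : Polynomial ℂ) : ℝ :=
  ∑ n ∈ p.support, ‖p.coeff n‖ * r ^ n / (n.factorial : ℝ) ^ s

/-- The comultiplication on `ℂ[x]`: the unique `ℂ`-algebra homomorphism with
`Δ(x) = x⊗1 + 1⊗x`; identifying `ℂ[x] ⊗ ℂ[x]` with `ℂ[x][y]`, it sends `p` to
`p(x + y)`. -/
noncomputable def comulPoly (p : Polynomial ℂ) : Polynomial (Polynomial ℂ) :=
  Polynomial.aeval (Polynomial.C Polynomial.X + Polynomial.X) p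

open Polynomial Finset


lemma coeff_pow_aux (n i j : ℕ) :
    ((((Polynomial.C Polynomial.X + Polynomial.X : Polynomial (Polynomial ℂ))) ^ n).coeff j).coeff i
      = if i + j = n then (n.choose j : ℂ) else 0 := by
  rw [add_comm, coeff_X_add_C_pow, ← Polynomial.C_eq_natCast, mul_comm,
    Polynomial.C_mul_X_pow_eq_monomial, Polynomial.coeff_monomial]
  by_cases hjn : j ≤ n
  · by_cases h : i + j = n
    · rw [if_pos (by omega), if_pos h]
    · rw [if_neg (by omega), if_neg h]
  · rw [Nat.choose_eq_zero_of_lt (by omega)]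
    simp

lemma coeff_comul (p : Polynomial ℂ) (i j : ℕ) :
    ((comulPoly p).coeff j).coeff i = p.coeff (i + j) * ((i + j).choose j : ℂ) := by
  rw [comulPoly, Polynomial.aeval_def, Polynomial.eval₂_eq_sum, Polynomial.sum]
  rw [Polynomial.finset_sum_coeff, Polynomial.finset_sum_coeff]
  have : ∀ n ∈ p.support,
      ((algebraMap ℂ (Polynomial (Polynomial ℂ)) (p.coeff n) *
        (Polynomial.C Polynomial.X + Polynomial.X) ^ n).coeff j).coeff i
      = if n = i + j then p.coeff (i + j) * ((i + j).choose j : ℂ) else 0 := by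
    intro n _
    rw [Polynomial.algebraMap_apply, Polynomial.algebraMap_apply, Algebra.algebraMap_self_apply, Polynomial.coeff_C_mul, Polynomial.coeff_C_mul,
      coeff_pow_aux]
    by_cases h : i + j = n
    · rw [if_pos h, if_pos h.symm, h]
    · rw [if_neg h, if_neg (fun hh => h hh.symm), mul_zero]
  rw [Finset.sum_congr rfl this, Finset.sum_ite_eq' p.support (i + j)]
  by_cases h : i + j ∈ p.support
  · rw [if_pos h]
  · rw [if_neg h, Polynomial.notMem_support_iff.mp h, zero_mul]

lemma choose_le_two_pow' (n k : ℕ) : n.choose k ≤ 2 ^ n := by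
  by_cases h : k ≤ n
  · calc n.choose k ≤ ∑ m ∈ range (n + 1), n.choose m :=
        Finset.single_le_sum (fun _ _ => Nat.zero_le _) (mem_range.mpr (by omega))
    _ = 2 ^ n := Nat.sum_range_choose n
  · rw [Nat.choose_eq_zero_of_lt (by omega)]; exact Nat.zero_le _

lemma two_pow_eq (s : ℝ) (n : ℕ) :
    ((2 : ℝ) ^ n : ℝ) ^ s * 2 ^ n = ((2 : ℝ) ^ (s + 1)) ^ n := by
  rw [← Real.rpow_natCast 2 n, ← Real.rpow_mul (by norm_num),
    ← Real.rpow_natCast ((2:ℝ) ^ (s+1)) n, ← Real.rpow_mul (by norm_num)]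
  rw [← Real.rpow_add (by norm_num)]
  ring_nf

theorem comul_estimate (s : ℝ) (hs : 0 ≤ s) (r : ℝ) (hr : 0 < r) (p : Polynomial ℂ) :
    ∑ j ∈ (comulPoly p).support, ∑ i ∈ ((comulPoly p).coeff j).support,
        ‖((comulPoly p).coeff j).coeff i‖ * r ^ (i + j) /
          ((i.factorial * j.factorial : ℝ)) ^ s
      ≤ pnorm ((2 : ℝ) ^ (s + 1) * r) s p := by
  set d := p.natDegree with hd
  set F : ℕ → ℕ → ℝ := fun j i =>
    ‖p.coeff (i + j)‖ * ((i + j).choose j : ℝ) * r ^ (i + j) /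
      ((i.factorial * j.factorial : ℝ)) ^ s with hF
  have hFnonneg : ∀ j i, 0 ≤ F j i := by
    intro j i
    apply div_nonneg (by positivity)
    positivity
  -- rewrite LHS with F
  have hterm : ∀ j i, ‖((comulPoly p).coeff j).coeff i‖ * r ^ (i + j) /
      ((i.factorial * j.factorial : ℝ)) ^ s = F j i := by
    intro j i
    rw [hF, coeff_comul, norm_mul, Complex.norm_natCast]
  calc ∑ j ∈ (comulPoly p).support, ∑ i ∈ ((comulPoly p).coeff j).support,
        ‖((comulPoly p).coeff j).coeff i‖ * r ^ (i + j) /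
          ((i.factorial * j.factorial : ℝ)) ^ s
      = ∑ j ∈ (comulPoly p).support, ∑ i ∈ ((comulPoly p).coeff j).support, F j i := by
        refine Finset.sum_congr rfl fun j _ => Finset.sum_congr rfl fun i _ => hterm j i
    _ ≤ ∑ j ∈ range (d + 1), ∑ i ∈ range (d + 1), F j i := by
        have hsub1 : (comulPoly p).support ⊆ range (d + 1) := by
          intro j hj
          rw [mem_range]
          by_contra hjd
          apply Polynomial.notMem_support_iff.mpr ?_ hj
          ext i
          rw [coeff_comul, Polynomial.coeff_eq_zero_of_natDegree_lt (by omega), zero_mul,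
            Polynomial.coeff_zero]
        refine le_trans (Finset.sum_le_sum_of_subset_of_nonneg hsub1
          (fun j _ _ => Finset.sum_nonneg fun i _ => hFnonneg j i)) ?_
        refine Finset.sum_le_sum fun j _ => ?_
        have hsub2 : ((comulPoly p).coeff j).support ⊆ range (d + 1) := by
          intro i hi
          rw [mem_range]
          by_contra hid
          apply Polynomial.notMem_support_iff.mpr ?_ hi
          rw [coeff_comul, Polynomial.coeff_eq_zero_of_natDegree_lt (by omega), zero_mul]
        exact Finset.sum_le_sum_of_subset_of_nonneg hsub2 (fun i _ _ => hFnonneg j i)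
    _ = ∑ x ∈ range (d + 1) ×ˢ range (d + 1), F x.1 x.2 := by rw [Finset.sum_product]
    _ ≤ ∑ x ∈ (range (2 * d + 1)).biUnion Finset.HasAntidiagonal.antidiagonal, F x.1 x.2 := by
        refine Finset.sum_le_sum_of_subset_of_nonneg ?_ (fun x _ _ => hFnonneg x.1 x.2)
        intro x hx
        rw [Finset.mem_product, mem_range, mem_range] at hx
        rw [Finset.mem_biUnion]
        exact ⟨x.1 + x.2, mem_range.mpr (by omega), Finset.HasAntidiagonal.mem_antidiagonal.mpr rfl⟩
    _ = ∑ n ∈ range (2 * d + 1), ∑ x ∈ Finset.HasAntidiagonal.antidiagonal n, F x.1 x.2 := by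
        refine Finset.sum_biUnion ?_
        intro m _ n _ hmn
        simp only [Function.onFun, Finset.disjoint_left]
        intro x h1 h2
        rw [Finset.HasAntidiagonal.mem_antidiagonal] at h1 h2
        exact hmn (h1.symm.trans h2)
    _ ≤ ∑ n ∈ range (2 * d + 1),
          ‖p.coeff n‖ * ((2:ℝ) ^ (s + 1) * r) ^ n / (n.factorial : ℝ) ^ s := by
        refine Finset.sum_le_sum fun n _ => ?_
        rw [Finset.Nat.sum_antidiagonal_eq_sum_range_succ_mk]
        -- x = (k, n - k); F k (n-k) with i = n - k, j = k, i + j = n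
        have key : ∀ k ∈ range (n + 1),
            F k (n - k) ≤ ‖p.coeff n‖ * (n.choose k : ℝ) * r ^ n *
              ((2:ℝ) ^ n : ℝ) ^ s / (n.factorial : ℝ) ^ s := by
          intro k hk
          rw [mem_range] at hk
          have hkn : k ≤ n := by omega
          have hij : n - k + k = n := by omega
          rw [hF]
          simp only [hij]
          rw [div_le_div_iff₀ (by positivity) (by positivity)]
          have hfac : (n.factorial : ℝ) ^ s ≤ ((2:ℝ) ^ n) ^ s * (((n - k).factorial * k.factorial : ℝ)) ^ s := by
            rw [← Real.mul_rpow (by positivity) (by positivity)]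
            apply Real.rpow_le_rpow (by positivity) ?_ hs
            have h1 : n.factorial = n.choose k * k.factorial * (n - k).factorial :=
              (Nat.choose_mul_factorial_mul_factorial hkn).symm
            have h2 : n.choose k ≤ 2 ^ n := choose_le_two_pow' n k
            have : n.factorial ≤ 2 ^ n * ((n - k).factorial * k.factorial) := by
              rw [h1]
              calc n.choose k * k.factorial * (n - k).factorial
                  = n.choose k * (k.factorial * (n - k).factorial) := by ring
                _ ≤ 2 ^ n * (k.factorial * (n - k).factorial) :=
                    Nat.mul_le_mul h2 (le_refl _)
                _ = 2 ^ n * ((n - k).factorial * k.factorial) := by ring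
            calc (n.factorial : ℝ) ≤ ((2 ^ n * ((n - k).factorial * k.factorial) : ℕ) : ℝ) := by
                  exact_mod_cast this
              _ = (2:ℝ) ^ n * (((n - k).factorial * k.factorial : ℝ)) := by push_cast; ring
          calc ‖p.coeff n‖ * (n.choose k : ℝ) * r ^ n * (n.factorial : ℝ) ^ s
              ≤ ‖p.coeff n‖ * (n.choose k : ℝ) * r ^ n *
                (((2:ℝ) ^ n) ^ s * (((n - k).factorial * k.factorial : ℝ)) ^ s) := by
                gcongr
              _ = ‖p.coeff n‖ * ↑(n.choose k) * r ^ n * ((2:ℝ) ^ n) ^ s *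
                  (((n - k).factorial * k.factorial : ℝ)) ^ s := by ring
        calc ∑ k ∈ range (n + 1), F k (n - k)
            ≤ ∑ k ∈ range (n + 1), ‖p.coeff n‖ * (n.choose k : ℝ) * r ^ n *
              ((2:ℝ) ^ n : ℝ) ^ s / (n.factorial : ℝ) ^ s := Finset.sum_le_sum key
          _ = ‖p.coeff n‖ * ((2:ℝ) ^ (s + 1) * r) ^ n / (n.factorial : ℝ) ^ s := by
              rw [← Finset.sum_div, ← Finset.sum_mul, ← Finset.sum_mul, ← Finset.mul_sum]
              have : ∑ k ∈ range (n + 1), (n.choose k : ℝ) = 2 ^ n := by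
                rw [← Nat.cast_sum, Nat.sum_range_choose]; push_cast; ring
              rw [this, mul_pow, ← two_pow_eq s n]
              ring
    _ = pnorm ((2 : ℝ) ^ (s + 1) * r) s p := by
        rw [pnorm]
        refine (Finset.sum_subset ?_ ?_).symm
        · intro n hn
          rw [mem_range]
          have := Polynomial.le_natDegree_of_mem_supp n hn
          omega
        · intro n _ hn
          rw [Polynomial.notMem_support_iff.mp hn]
          simp
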